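/- The Cygan metric satisfies the triangle inequality: for all points p₁, p₂, p₃ in ℂ × ℝ × ℝ≥0, ρ(p₁, p₂) ≤ ρ(p₁, p₃) + ρ(p₃, p₂). -/

import Mathlib

open Complex

/-- The Cygan metric on `ℂ × ℝ × ℝ` (third coordinate is the height `u ≥ 0`). -/
noncomputable def cygan (p q : ℂ × ℝ × ℝ) : ℝ :=
  Real.sqrt (‖((((‖(p.1 - q.1)‖) ^ 2 + |p.2.2 - q.2.2| : ℝ) : ℂ)
      - Complex.I * (p.2.1 : ℂ) + Complex.I * (q.2.1 : ℂ)
      - 2 * Complex.I * (((p.1 * (starRingEnd ℂ) q.1).im : ℝ) : ℂ))‖)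

/-- Heisenberg group multiplication on `ℂ × ℝ`. -/
noncomputable def hmul (p q : ℂ × ℝ) : ℂ × ℝ :=
  (p.1 + q.1, p.2 + q.2 + 2 * ((starRingEnd ℂ) q.1 * p.1).im)

/-- The Korányi gauge on `ℂ × ℝ`. -/
noncomputable def hgauge (p : ℂ × ℝ) : ℝ :=
  Real.sqrt (‖((-((‖p.1‖) ^ 2 : ℝ) : ℂ) + Complex.I * (p.2 : ℂ))‖)

/-- The Heisenberg (Korányi–Cygan) metric on `ℂ × ℝ`. -/
noncomputable def hdist (p q : ℂ × ℝ) : ℝ :=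
  hgauge (hmul (-p.1, -p.2) q)

/-- Heisenberg inversion on `ℂ × ℝ`. -/
noncomputable def hinv (p : ℂ × ℝ) : ℂ × ℝ :=
  ((p.1 / ((-((‖p.1‖) ^ 2 : ℝ) : ℂ) + Complex.I * (p.2 : ℂ))),
    -p.2 / (‖((-((‖p.1‖) ^ 2 : ℝ) : ℂ) + Complex.I * (p.2 : ℂ))‖) ^ 2)

/-- Cygan inversion on `ℂ × ℝ × ℝ`. -/
noncomputable def cinv (p : ℂ × ℝ × ℝ) : ℂ × ℝ × ℝ :=
  (p.1 / ((-((‖p.1‖) ^ 2 : ℝ) : ℂ) + Complex.I * (p.2.1 : ℂ) - (p.2.2 : ℂ)),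
    -p.2.1 / (‖((-((‖p.1‖) ^ 2 : ℝ) : ℂ) + Complex.I * (p.2.1 : ℂ) - (p.2.2 : ℂ))‖) ^ 2,
    p.2.2 / (‖((-((‖p.1‖) ^ 2 : ℝ) : ℂ) + Complex.I * (p.2.1 : ℂ) - (p.2.2 : ℂ))‖) ^ 2)


noncomputable def cyA (p q : ℂ × ℝ × ℝ) : ℂ :=
  (((‖p.1 - q.1‖) ^ 2 + |p.2.2 - q.2.2| : ℝ) : ℂ)
      - Complex.I * (p.2.1 : ℂ) + Complex.I * (q.2.1 : ℂ)
      - 2 * Complex.I * (((p.1 * (starRingEnd ℂ) q.1).im : ℝ) : ℂ)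

lemma cyA_re (p q : ℂ × ℝ × ℝ) :
    (cyA p q).re = (‖p.1 - q.1‖) ^ 2 + |p.2.2 - q.2.2| := by
  simp [cyA, ← Complex.ofReal_pow]

lemma cyA_identity (p₁ p₂ p₃ : ℂ × ℝ × ℝ) :
    cyA p₁ p₂ = cyA p₁ p₃ + cyA p₃ p₂ + 2 * (p₁.1 - p₃.1) * (starRingEnd ℂ) (p₃.1 - p₂.1)
      + ((|p₁.2.2 - p₂.2.2| - |p₁.2.2 - p₃.2.2| - |p₃.2.2 - p₂.2.2| : ℝ) : ℂ) := by
  apply Complex.ext <;>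
  · simp [cyA, Complex.sq_norm, Complex.normSq_apply, Complex.mul_re, Complex.mul_im]
    ring

theorem cygan_triangle' (p₁ p₂ p₃ : ℂ × ℝ × ℝ) :
    Real.sqrt (‖cyA p₁ p₂‖) ≤
      Real.sqrt (‖cyA p₁ p₃‖) + Real.sqrt (‖cyA p₃ p₂‖) := by
  set a := ‖cyA p₁ p₃‖ with ha
  set b := ‖cyA p₃ p₂‖ with hb
  set x := ‖p₁.1 - p₃.1‖ with hx
  set y := ‖p₃.1 - p₂.1‖ with hy
  set s := |p₁.2.2 - p₃.2.2| with hs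
  set t := |p₃.2.2 - p₂.2.2| with ht
  have hx0 : 0 ≤ x := norm_nonneg _
  have hy0 : 0 ≤ y := norm_nonneg _
  have hs0 : 0 ≤ s := abs_nonneg _
  have ht0 : 0 ≤ t := abs_nonneg _
  have ha0 : 0 ≤ a := norm_nonneg _
  have hb0 : 0 ≤ b := norm_nonneg _
  have hxa : x ^ 2 + s ≤ a := by
    rw [ha]
    calc x ^ 2 + s = (cyA p₁ p₃).re := (cyA_re p₁ p₃).symm
    _ ≤ ‖cyA p₁ p₃‖ := Complex.re_le_norm _
  have hyb : y ^ 2 + t ≤ b := by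
    rw [hb]
    calc y ^ 2 + t = (cyA p₃ p₂).re := (cyA_re p₃ p₂).symm
    _ ≤ ‖cyA p₃ p₂‖ := Complex.re_le_norm _
  set δ : ℝ := |p₁.2.2 - p₂.2.2| - |p₁.2.2 - p₃.2.2| - |p₃.2.2 - p₂.2.2| with hδ
  -- real triangle inequality facts
  have h12 : |p₁.2.2 - p₂.2.2| ≤ s + t := abs_sub_le _ p₃.2.2 _
  have h13 : s ≤ |p₁.2.2 - p₂.2.2| + t := by
    calc s ≤ |p₁.2.2 - p₂.2.2| + |p₂.2.2 - p₃.2.2| := abs_sub_le _ p₂.2.2 _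
    _ = |p₁.2.2 - p₂.2.2| + t := by rw [abs_sub_comm p₂.2.2 p₃.2.2]
  have h23 : t ≤ s + |p₁.2.2 - p₂.2.2| := by
    calc t ≤ |p₃.2.2 - p₁.2.2| + |p₁.2.2 - p₂.2.2| := abs_sub_le _ p₁.2.2 _
    _ = s + |p₁.2.2 - p₂.2.2| := by rw [abs_sub_comm p₃.2.2 p₁.2.2]
  have hδ0 : δ ≤ 0 := by rw [hδ]; linarith
  have hss : Real.sqrt s ^ 2 = s := Real.sq_sqrt hs0
  have htt : Real.sqrt t ^ 2 = t := Real.sq_sqrt ht0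
  have hsq0 : 0 ≤ Real.sqrt s := Real.sqrt_nonneg _
  have htq0 : 0 ≤ Real.sqrt t := Real.sqrt_nonneg _
  have hδst : -δ ≤ 2 * (Real.sqrt s * Real.sqrt t) := by
    rcases le_total s t with h | h
    · have hmono : Real.sqrt s ≤ Real.sqrt t := Real.sqrt_le_sqrt h
      have : -δ ≤ 2 * s := by rw [hδ]; linarith
      nlinarith
    · have hmono : Real.sqrt t ≤ Real.sqrt s := Real.sqrt_le_sqrt h
      have : -δ ≤ 2 * t := by rw [hδ]; linarith
      nlinarith
  -- triangle inequality in ℂ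
  have habs : ‖cyA p₁ p₂‖ ≤ a + b + 2 * (x * y) + (-δ) := by
    rw [cyA_identity p₁ p₂ p₃]
    calc ‖cyA p₁ p₃ + cyA p₃ p₂ + 2 * (p₁.1 - p₃.1) * (starRingEnd ℂ) (p₃.1 - p₂.1)
          + ((δ : ℝ) : ℂ)‖
        ≤ ‖cyA p₁ p₃ + cyA p₃ p₂ + 2 * (p₁.1 - p₃.1) * (starRingEnd ℂ) (p₃.1 - p₂.1)‖
          + ‖((δ : ℝ) : ℂ)‖ := norm_add_le _ _
      _ ≤ ‖cyA p₁ p₃ + cyA p₃ p₂‖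
          + ‖2 * (p₁.1 - p₃.1) * (starRingEnd ℂ) (p₃.1 - p₂.1)‖
          + ‖((δ : ℝ) : ℂ)‖ := by gcongr; exact norm_add_le _ _
      _ ≤ a + b + ‖2 * (p₁.1 - p₃.1) * (starRingEnd ℂ) (p₃.1 - p₂.1)‖
          + ‖((δ : ℝ) : ℂ)‖ := by gcongr; exact norm_add_le _ _
      _ = a + b + 2 * (x * y) + (-δ) := by
          rw [Complex.norm_real, Real.norm_eq_abs, abs_of_nonpos hδ0]
          congr 1
          congr 1
          simp [norm_mul, ← map_sub, Complex.norm_conj, hx, hy]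
          ring
  -- Cauchy–Schwarz
  have hcs : x * y + Real.sqrt s * Real.sqrt t ≤ Real.sqrt (a * b) := by
    have hlhs0 : 0 ≤ x * y + Real.sqrt s * Real.sqrt t := by positivity
    have hsqle : (x * y + Real.sqrt s * Real.sqrt t) ^ 2 ≤ a * b := by
      have h1 : (x * y + Real.sqrt s * Real.sqrt t) ^ 2 ≤ (x ^ 2 + s) * (y ^ 2 + t) := by
        nlinarith [sq_nonneg (x * Real.sqrt t - y * Real.sqrt s)]
      have h2 : (x ^ 2 + s) * (y ^ 2 + t) ≤ a * b := by
        apply mul_le_mul hxa hyb (by positivity) (by linarith)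
      linarith
    calc x * y + Real.sqrt s * Real.sqrt t
        = Real.sqrt ((x * y + Real.sqrt s * Real.sqrt t) ^ 2) := (Real.sqrt_sq hlhs0).symm
      _ ≤ Real.sqrt (a * b) := Real.sqrt_le_sqrt hsqle
  have hfin : ‖cyA p₁ p₂‖ ≤ (Real.sqrt a + Real.sqrt b) ^ 2 := by
    have he : (Real.sqrt a + Real.sqrt b) ^ 2 = a + b + 2 * (Real.sqrt a * Real.sqrt b) := by
      rw [add_sq, Real.sq_sqrt ha0, Real.sq_sqrt hb0]; ring
    have hm : Real.sqrt (a * b) = Real.sqrt a * Real.sqrt b := Real.sqrt_mul ha0 b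
    rw [he]
    rw [hm] at hcs
    linarith
  calc Real.sqrt (‖cyA p₁ p₂‖)
      ≤ Real.sqrt ((Real.sqrt a + Real.sqrt b) ^ 2) := Real.sqrt_le_sqrt hfin
    _ = Real.sqrt a + Real.sqrt b := Real.sqrt_sq (by positivity)

theorem cygan_triangle (p₁ p₂ p₃ : ℂ × ℝ × ℝ)
    (h1 : 0 ≤ p₁.2.2) (h2 : 0 ≤ p₂.2.2) (h3 : 0 ≤ p₃.2.2) :
    cygan p₁ p₂ ≤ cygan p₁ p₃ + cygan p₃ p₂ :=
  cygan_triangle' p₁ p₂ p₃
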